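/- For every m ≥ 1, the decorrelation bound |∫_Z ∫_Z ⟨f(z), f(z')⟩ P^{m}(z, dz') dρ(z)| ≤ 2σ²·φ_m holds, where φ_m is the φ-mixing coefficient of the stationary Markov chain. -/

import Mathlib

open MeasureTheory ProbabilityTheory
open scoped ENNReal RealInnerProductSpace

/-- The `m`-step transition kernel obtained by iterating `P`. -/
noncomputable def kernelIter {Z : Type*} [MeasurableSpace Z] (P : Kernel Z Z) : ℕ → Kernel Z Z
  | 0 => Kernel.id
  | m + 1 => (kernelIter P m).comp P

/-- The φ-mixing coefficient of the stationary Markov chain with kernel `P` and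
invariant distribution `ρ`. -/
noncomputable def phiCoef {Z : Type*} [MeasurableSpace Z] (P : Kernel Z Z) (ρ : Measure Z)
    (m : ℕ) : ℝ :=
  essSup (fun z => ⨆ B : {B : Set Z // MeasurableSet B},
    |(kernelIter P m z B.1).toReal - (ρ B.1).toReal|) ρ

section Aux

variable {Z : Type*} [MeasurableSpace Z]

instance kernelIter_isMarkov (P : Kernel Z Z) [IsMarkovKernel P] (m : ℕ) :
    IsMarkovKernel (kernelIter P m) := by
  induction m with
  | zero => rw [kernelIter]; infer_instance
  | succ m ih => rw [kernelIter]; infer_instance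

/-- Bounded strongly measurable functions are integrable w.r.t. finite measures. -/
lemma integrable_of_bound {W : Type*} [NormedAddCommGroup W] {μ : Measure Z}
    [IsFiniteMeasure μ] {h : Z → W} (hmeas : StronglyMeasurable h) {σ : ℝ}
    (hb : ∀ z, ‖h z‖ ≤ σ) : Integrable h μ :=
  (memLp_top_of_bound hmeas.aestronglyMeasurable σ (Filter.Eventually.of_forall hb)).integrable
    le_top

/-- Key real-valued decorrelation estimate via Jordan decomposition. -/
lemma abs_integral_sub_integral_le {μ ν : Measure Z} [IsFiniteMeasure μ] [IsFiniteMeasure ν]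
    {h : Z → ℝ} (hmeas : StronglyMeasurable h) {σ : ℝ} (hσ : 0 ≤ σ) (hb : ∀ z, |h z| ≤ σ)
    {D : ℝ} (hD : ∀ B : Set Z, MeasurableSet B → |(μ B).toReal - (ν B).toReal| ≤ D) :
    |∫ z, h z ∂μ - ∫ z, h z ∂ν| ≤ 2 * σ * D := by
  set s : SignedMeasure Z := μ.toSignedMeasure - ν.toSignedMeasure with hs_def
  set p : Measure Z := s.toJordanDecomposition.posPart with hp_def
  set n : Measure Z := s.toJordanDecomposition.negPart with hn_def
  have hsapp : ∀ B : Set Z, MeasurableSet B →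
      (μ B).toReal - (ν B).toReal = (p B).toReal - (n B).toReal := by
    intro B hB
    have h1 : s B = (μ B).toReal - (ν B).toReal := by
      rw [hs_def, VectorMeasure.sub_apply, Measure.toSignedMeasure_apply_measurable hB,
        Measure.toSignedMeasure_apply_measurable hB]
      rfl
    have h2 : s.toJordanDecomposition.toSignedMeasure B = (p B).toReal - (n B).toReal := by
      rw [JordanDecomposition.toSignedMeasure, Measure.toSignedMeasure_sub_apply hB]
      rfl
    rw [← h1, ← h2, SignedMeasure.toSignedMeasure_toJordanDecomposition]
  -- the measures μ + n and ν + p agree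
  have hmeq : μ + n = ν + p := by
    ext B hB
    have h1 := hsapp B hB
    have h2 : (μ B).toReal + (n B).toReal = (ν B).toReal + (p B).toReal := by linarith
    have h3 : ((μ + n) B).toReal = ((ν + p) B).toReal := by
      simp only [Measure.add_apply]
      rw [ENNReal.toReal_add (measure_ne_top _ _) (measure_ne_top _ _),
        ENNReal.toReal_add (measure_ne_top _ _) (measure_ne_top _ _)]
      exact h2
    exact (ENNReal.toReal_eq_toReal_iff' (by simp [measure_ne_top]) (by simp [measure_ne_top])).mp h3
  have hb' : ∀ z, ‖h z‖ ≤ σ := fun z => (Real.norm_eq_abs _).trans_le (hb z)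
  have hμi : Integrable h μ := integrable_of_bound hmeas hb'
  have hνi : Integrable h ν := integrable_of_bound hmeas hb'
  have hpi : Integrable h p := integrable_of_bound hmeas hb'
  have hni : Integrable h n := integrable_of_bound hmeas hb'
  have key : ∫ z, h z ∂μ + ∫ z, h z ∂n = ∫ z, h z ∂ν + ∫ z, h z ∂p := by
    rw [← integral_add_measure hμi hni, ← integral_add_measure hνi hpi, hmeq]
  obtain ⟨S, hSm, hpS, hnSc⟩ := s.toJordanDecomposition.mutuallySingular
  have hD0 : 0 ≤ D := le_trans (abs_nonneg _) (hD ∅ MeasurableSet.empty)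
  -- total mass bounds
  have hpB : (p Set.univ).toReal ≤ D := by
    have huniv : p Set.univ = p Sᶜ := by
      rw [← measure_add_measure_compl hSm, hpS, zero_add]
    have := hsapp Sᶜ hSm.compl
    rw [hnSc] at this
    simp only [ENNReal.toReal_zero, sub_zero] at this
    rw [huniv, ← this] at *
    calc (μ Sᶜ).toReal - (ν Sᶜ).toReal ≤ |(μ Sᶜ).toReal - (ν Sᶜ).toReal| := le_abs_self _
    _ ≤ D := hD _ hSm.compl
  have hnB : (n Set.univ).toReal ≤ D := by
    have huniv : n Set.univ = n S := by
      rw [← measure_add_measure_compl hSm, hnSc, add_zero]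
    have := hsapp S hSm
    rw [hpS] at this
    simp only [ENNReal.toReal_zero, zero_sub] at this
    have hns : (n S).toReal = (ν S).toReal - (μ S).toReal := by linarith
    rw [huniv, hns]
    calc (ν S).toReal - (μ S).toReal ≤ |(μ S).toReal - (ν S).toReal| := by
          rw [abs_sub_comm]; exact le_abs_self _
    _ ≤ D := hD _ hSm
  have hip : |∫ z, h z ∂p| ≤ σ * D := by
    have := norm_integral_le_of_norm_le_const (μ := p) (f := h)
      (Filter.Eventually.of_forall hb')
    rw [Real.norm_eq_abs] at this
    exact this.trans (by unfold Measure.real; nlinarith [ENNReal.toReal_nonneg (a := p Set.univ)])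
  have hin : |∫ z, h z ∂n| ≤ σ * D := by
    have := norm_integral_le_of_norm_le_const (μ := n) (f := h)
      (Filter.Eventually.of_forall hb')
    rw [Real.norm_eq_abs] at this
    exact this.trans (by unfold Measure.real; nlinarith [ENNReal.toReal_nonneg (a := n Set.univ)])
  have heq : ∫ z, h z ∂μ - ∫ z, h z ∂ν = ∫ z, h z ∂p - ∫ z, h z ∂n := by linarith
  rw [heq]
  calc |∫ z, h z ∂p - ∫ z, h z ∂n| ≤ |∫ z, h z ∂p| + |∫ z, h z ∂n| := abs_sub _ _
  _ ≤ σ * D + σ * D := add_le_add hip hin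
  _ = 2 * σ * D := by ring

/-- Vector-valued version. -/
lemma norm_integral_sub_integral_le {W : Type*} [NormedAddCommGroup W]
    [InnerProductSpace ℝ W] [CompleteSpace W]
    {μ ν : Measure Z} [IsFiniteMeasure μ] [IsFiniteMeasure ν]
    {h : Z → W} (hmeas : StronglyMeasurable h) {σ : ℝ} (hσ : 0 ≤ σ) (hb : ∀ z, ‖h z‖ ≤ σ)
    {D : ℝ} (hD : ∀ B : Set Z, MeasurableSet B → |(μ B).toReal - (ν B).toReal| ≤ D) :
    ‖∫ z, h z ∂μ - ∫ z, h z ∂ν‖ ≤ 2 * σ * D := by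
  have hD0 : 0 ≤ D := le_trans (abs_nonneg _) (hD ∅ MeasurableSet.empty)
  set v : W := ∫ z, h z ∂μ - ∫ z, h z ∂ν with hv
  rcases eq_or_ne v 0 with hv0 | hv0
  · rw [hv0, norm_zero]; positivity
  set u : W := ‖v‖⁻¹ • v with hu
  have hμi : Integrable h μ := integrable_of_bound hmeas hb
  have hνi : Integrable h ν := integrable_of_bound hmeas hb
  have hnv : ‖v‖ = ⟪u, v⟫ := by
    rw [hu, real_inner_smul_left, real_inner_self_eq_norm_sq]
    field_simp [norm_ne_zero_iff.mpr hv0]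
  have hsplit : ⟪u, v⟫ = ∫ z, ⟪u, h z⟫ ∂μ - ∫ z, ⟪u, h z⟫ ∂ν := by
    rw [hv, inner_sub_right, integral_inner hμi, integral_inner hνi]
  have hub : ∀ z, |⟪u, h z⟫| ≤ σ := by
    intro z
    have h1 : |⟪u, h z⟫| ≤ ‖u‖ * ‖h z‖ := abs_real_inner_le_norm _ _
    have h2 : ‖u‖ = 1 := by
      rw [hu, norm_smul, norm_inv, norm_norm, inv_mul_cancel₀ (norm_ne_zero_iff.mpr hv0)]
    rw [h2, one_mul] at h1
    exact h1.trans (hb z)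
  calc ‖v‖ = ∫ z, ⟪u, h z⟫ ∂μ - ∫ z, ⟪u, h z⟫ ∂ν := hnv.trans hsplit
  _ ≤ |∫ z, ⟪u, h z⟫ ∂μ - ∫ z, ⟪u, h z⟫ ∂ν| := le_abs_self _
  _ ≤ 2 * σ * D := abs_integral_sub_integral_le (stronglyMeasurable_const.inner hmeas) hσ hub hD

end Aux

theorem decorrelation_phi_mixing
    {Z : Type*} [MeasurableSpace Z]
    {W : Type*} [NormedAddCommGroup W] [InnerProductSpace ℝ W] [CompleteSpace W]
    (P : Kernel Z Z) [IsMarkovKernel P]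
    (ρ : Measure Z) [IsProbabilityMeasure ρ]
    (hinv : ρ.bind (fun z => P z) = ρ)
    (f : Z → W) (hf_meas : StronglyMeasurable f) (hf_int : Integrable f ρ)
    (hf_mean : ∫ z, f z ∂ρ = 0)
    (σ : ℝ) (hσ : 0 ≤ σ) (hf_bd : ∀ z, ‖f z‖ ≤ σ)
    (m : ℕ) (hm : 1 ≤ m) :
    |∫ z, ∫ z', ⟪f z, f z'⟫ ∂(kernelIter P m z) ∂ρ| ≤ 2 * σ ^ 2 * phiCoef P ρ m := by
  set κ := kernelIter P m with hκ
  set g : Z → W := fun z => ∫ z', f z' ∂(κ z) with hg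
  have hg_meas : StronglyMeasurable g := by
    have h2 : StronglyMeasurable fun p : Z × Z => f p.2 := hf_meas.comp_measurable measurable_snd
    exact h2.integral_kernel_prod_right'
  have hginner : ∀ z, ∫ z', ⟪f z, f z'⟫ ∂(κ z) = ⟪f z, g z⟫ := fun z =>
    integral_inner (integrable_of_bound hf_meas hf_bd) (f z)
  set φ : Z → ℝ := fun z => ⨆ B : {B : Set Z // MeasurableSet B},
    |(κ z B.1).toReal - (ρ B.1).toReal| with hφ
  have hterm : ∀ z (B : {B : Set Z // MeasurableSet B}),
      |(κ z B.1).toReal - (ρ B.1).toReal| ≤ 2 := by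
    intro z B
    have h1 : (κ z B.1).toReal ≤ 1 := by
      have := prob_le_one (μ := κ z) (s := B.1)
      simpa using ENNReal.toReal_mono (by simp) this
    have h2 : (ρ B.1).toReal ≤ 1 := by
      have := prob_le_one (μ := ρ) (s := B.1)
      simpa using ENNReal.toReal_mono (by simp) this
    have h3 := ENNReal.toReal_nonneg (a := κ z B.1)
    have h4 := ENNReal.toReal_nonneg (a := ρ B.1)
    rw [abs_sub_le_iff]; constructor <;> linarith
  have hbdd : ∀ z, BddAbove (Set.range fun B : {B : Set Z // MeasurableSet B} =>
      |(κ z B.1).toReal - (ρ B.1).toReal|) := by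
    intro z
    refine ⟨2, ?_⟩
    rintro x ⟨B, rfl⟩
    exact hterm z B
  have hφD : ∀ z, ∀ B : Set Z, MeasurableSet B → |(κ z B).toReal - (ρ B).toReal| ≤ φ z :=
    fun z B hB => le_ciSup (hbdd z) ⟨B, hB⟩
  have hφ0 : ∀ z, 0 ≤ φ z := fun z => le_trans (abs_nonneg _) (hφD z ∅ MeasurableSet.empty)
  have hg_bd : ∀ z, ‖g z‖ ≤ 2 * σ * φ z := by
    intro z
    have := norm_integral_sub_integral_le (μ := κ z) (ν := ρ) hf_meas hσ hf_bd
      (D := φ z) (fun B hB => hφD z B hB)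
    rwa [hf_mean, sub_zero] at this
  have hφ_le : ∀ᵐ z ∂ρ, φ z ≤ phiCoef P ρ m := by
    have hbU : Filter.IsBoundedUnder (· ≤ ·) (ae ρ) φ := by
      refine ⟨2, Filter.eventually_map.mpr (Filter.Eventually.of_forall fun z => ?_)⟩
      exact ciSup_le (fun B => hterm z B)
    exact ae_le_essSup hbU
  have hFb : ∀ᵐ z ∂ρ, ‖⟪f z, g z⟫‖ ≤ 2 * σ ^ 2 * phiCoef P ρ m := by
    filter_upwards [hφ_le] with z hz
    rw [Real.norm_eq_abs]
    have h1 : |⟪f z, g z⟫| ≤ ‖f z‖ * ‖g z‖ := abs_real_inner_le_norm _ _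
    have h2 := hf_bd z
    have h3 := hg_bd z
    have h4 := norm_nonneg (f z)
    have h5 := norm_nonneg (g z)
    nlinarith [hφ0 z]
  have hrw : ∫ z, ∫ z', ⟪f z, f z'⟫ ∂(κ z) ∂ρ = ∫ z, ⟪f z, g z⟫ ∂ρ :=
    integral_congr_ae (Filter.Eventually.of_forall hginner)
  rw [hrw, ← Real.norm_eq_abs]
  calc ‖∫ z, ⟪f z, g z⟫ ∂ρ‖ ≤ ∫ _z, 2 * σ ^ 2 * phiCoef P ρ m ∂ρ :=
        norm_integral_le_of_norm_le (integrable_const _) hFb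
  _ = 2 * σ ^ 2 * phiCoef P ρ m := by simp
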